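/- Let d : ℕ → A be admissible. Then for every n ∈ ℕ, the number of distinct follower sets of words of length n in X_d satisfies |F(n)| ≤ n + 1. -/

import Mathlib

namespace BetaShift

variable {A : Type*}

/-- The shift map: `(shift x) n = x (n+1)`. -/
def shift (x : ℕ → A) : ℕ → A := fun n => x (n + 1)

/-- Lexicographic order on one-sided sequences: `x = y`, or there is an index `i`
such that `x j = y j` for all `j < i` and `x i < y i`. -/
def SeqLe [LinearOrder A] (x y : ℕ → A) : Prop :=
  x = y ∨ ∃ i, (∀ j, j < i → x j = y j) ∧ x i < y i

/-- A word `w` occurs in the sequence `x`. -/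
def Occurs (w : List A) (x : ℕ → A) : Prop :=
  ∃ i : ℕ, ∀ j : Fin w.length, x (i + j) = w.get j

/-- `Complexity x n` is the number `Φ_n(x)` of distinct words of length `n` occurring in `x`. -/
noncomputable def Complexity (x : ℕ → A) (n : ℕ) : ℕ :=
  Set.ncard {w : List A | w.length = n ∧ Occurs w x}

/-- A sequence is eventually periodic if there are `p ≥ 1` and `N` with
`d (i + p) = d i` for all `i ≥ N`. -/
def EventuallyPeriodic (d : ℕ → A) : Prop :=
  ∃ p, 1 ≤ p ∧ ∃ N, ∀ i, N ≤ i → d (i + p) = d i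

/-- `(d)_k`, the `k`-letter prefix of the sequence `d`, as a word. -/
def prefixWord (d : ℕ → A) (k : ℕ) : List A := List.ofFn (fun i : Fin k => d i)

variable {m : ℕ}

/-- `d` is admissible: every shift of `d` is lexicographically ≤ `d`,
and `d` is not eventually `0`. -/
def Admissible (d : ℕ → Fin m) : Prop :=
  (∀ i, SeqLe (shift^[i] d) d) ∧ ∀ N, ∃ i, N ≤ i ∧ (d i).val ≠ 0

/-- The one-sided β-shift `X_d` determined by the admissible sequence `d`. -/
def XSet (d : ℕ → Fin m) : Set (ℕ → Fin m) :=
  {x | ∀ i, SeqLe (shift^[i] x) d}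

/-- The language of `X_d`: all words occurring in some point of `X_d`. -/
def Lang (d : ℕ → Fin m) : Set (List (Fin m)) :=
  {w | ∃ x ∈ XSet d, Occurs w x}

/-- The follower set of the word `w` in `X_d`. -/
def Fol (d : ℕ → Fin m) (w : List (Fin m)) : Set (List (Fin m)) :=
  {u | w ++ u ∈ Lang d}

/-- The predecessor set of the word `w` in `X_d`. -/
def Pred (d : ℕ → Fin m) (w : List (Fin m)) : Set (List (Fin m)) :=
  {s | s ++ w ∈ Lang d}

/-- The extender set of the word `w` in `X_d`. -/
def Ext (d : ℕ → Fin m) (w : List (Fin m)) : Set (List (Fin m) × List (Fin m)) :=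
  {p | p.1 ++ w ++ p.2 ∈ Lang d}

/-- `|F(n)|`: the number of distinct follower sets of words of length `n` in `X_d`. -/
noncomputable def FolCount (d : ℕ → Fin m) (n : ℕ) : ℕ :=
  Set.ncard {S | ∃ w ∈ Lang d, w.length = n ∧ S = Fol d w}

/-- `|P(n)|`: the number of distinct predecessor sets of words of length `n` in `X_d`. -/
noncomputable def PredCount (d : ℕ → Fin m) (n : ℕ) : ℕ :=
  Set.ncard {S | ∃ w ∈ Lang d, w.length = n ∧ S = Pred d w}

/-- `|E(n)|`: the number of distinct extender sets of words of length `n` in `X_d`. -/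
noncomputable def ExtCount (d : ℕ → Fin m) (n : ℕ) : ℕ :=
  Set.ncard {S | ∃ w ∈ Lang d, w.length = n ∧ S = Ext d w}

/-- The largest `k ≤ n` such that the `k`-letter prefix of `d` is a suffix of `v`
(`k = 0`, the empty prefix, always works). -/
def classIndex (d : ℕ → Fin m) (n : ℕ) (v : List (Fin m)) : ℕ :=
  Nat.findGreatest (fun k => prefixWord d k <:+ v) n

/-- Lexicographic comparison of (equal-length) words: `u = v`, or at the first
index where they differ, `u` takes the smaller value. -/
def WordLe [LinearOrder A] (u v : List A) : Prop :=
  u = v ∨ ∃ i, ∃ (hu : i < u.length) (hv : i < v.length),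
    (∀ j (hju : j < u.length) (hjv : j < v.length), j < i → u.get ⟨j, hju⟩ = v.get ⟨j, hjv⟩) ∧
    u.get ⟨i, hu⟩ < v.get ⟨i, hv⟩

end BetaShift

open BetaShift

namespace Stmt2Aux

variable {m : ℕ}

/-- Lex-≤ restricted to the first `L` coordinates. -/
def PLe (L : ℕ) (x y : ℕ → Fin m) : Prop :=
  (∀ j, j < L → x j = y j) ∨ ∃ t, t < L ∧ (∀ j, j < t → x j = y j) ∧ x t < y t

/-- A word viewed as a sequence, padded by `0`. -/
def wseq (hm : 0 < m) (w : List (Fin m)) : ℕ → Fin m :=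
  fun n => w.getD n ⟨0, hm⟩

lemma shift_iter (x : ℕ → Fin m) (k n : ℕ) : (shift^[k] x) n = x (n + k) := by
  induction k generalizing n with
  | zero => rfl
  | succ k ih =>
    rw [Function.iterate_succ_apply', shift, ih]
    congr 1
    omega

variable {hm : 0 < m}

lemma wseq_lt {w : List (Fin m)} {n : ℕ} (h : n < w.length) :
    wseq hm w n = w[n] := List.getD_eq_getElem _ _ h

lemma wseq_ge {w : List (Fin m)} {n : ℕ} (h : w.length ≤ n) :
    wseq hm w n = ⟨0, hm⟩ := List.getD_eq_default _ _ h

lemma wseq_append_right (a b : List (Fin m)) (t : ℕ) :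
    wseq hm (a ++ b) (a.length + t) = wseq hm b t := by
  unfold wseq
  rw [List.getD_append_right a b _ _ (Nat.le_add_right _ _), Nat.add_sub_cancel_left]

lemma wseq_append_left {a : List (Fin m)} (b : List (Fin m)) {j : ℕ} (h : j < a.length) :
    wseq hm (a ++ b) j = wseq hm a j := by
  unfold wseq
  rw [List.getD_append a b _ _ h]

lemma length_prefixWord (d : ℕ → Fin m) (k : ℕ) : (prefixWord d k).length = k :=
  List.length_ofFn

lemma wseq_prefixWord (d : ℕ → Fin m) {k j : ℕ} (h : j < k) :
    wseq hm (prefixWord d k) j = d j := by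
  have h' : j < (prefixWord d k).length := by rwa [length_prefixWord]
  rw [wseq_lt h']
  simp [prefixWord]

lemma PLe_congr {L : ℕ} {x x' y : ℕ → Fin m} (h : ∀ j, j < L → x j = x' j) :
    PLe L x y → PLe L x' y := by
  rintro (hag | ⟨t, ht, hag, hlt⟩)
  · exact Or.inl fun j hj => (h j hj).symm.trans (hag j hj)
  · exact Or.inr ⟨t, ht, fun j hj => (h j (hj.trans ht)).symm.trans (hag j hj),
      (h t ht) ▸ hlt⟩


lemma mem_lang_iff {d : ℕ → Fin m} (hd : Admissible d) (w : List (Fin m)) :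
    w ∈ Lang d ↔ ∀ i, PLe (w.length - i) (fun t => wseq hm w (t + i)) d := by
  constructor
  · rintro ⟨x, hx, p, hp⟩
    intro i
    have hp' : ∀ j, (h : j < w.length) → x (p + j) = wseq hm w j := fun j h => by
      rw [wseq_lt h]; exact hp ⟨j, h⟩
    have key : ∀ j, j < w.length - i → wseq hm w (j + i) = (shift^[p + i] x) j := by
      intro j hj
      rw [shift_iter, ← hp' (j + i) (by omega)]
      congr 1; omega
    rcases hx (p + i) with heq | ⟨t, hag, hlt⟩
    · left; intro j hj
      show wseq hm w (j + i) = d j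
      rw [key j hj, heq]
    · by_cases ht : t < w.length - i
      · right
        refine ⟨t, ht, fun j hj => ?_, ?_⟩
        · show wseq hm w (j + i) = d j
          rw [key j (hj.trans ht)]; exact hag j hj
        · show wseq hm w (t + i) < d t
          rw [key t ht]; exact hlt
      · left; intro j hj
        show wseq hm w (j + i) = d j
        rw [key j hj]; exact hag j (by omega)
  · intro h
    refine ⟨wseq hm w, ?_, 0, fun j => by
      rw [Nat.zero_add, List.get_eq_getElem]; exact wseq_lt j.isLt⟩
    intro i
    set L := w.length - i with hL
    have hzero : ∀ s, L ≤ s → wseq hm w (s + i) = ⟨0, hm⟩ := by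
      intro s hs; exact wseq_ge (by omega)
    rcases h i with hag | ⟨t, ht, hag, hlt⟩
    · obtain ⟨i0, hi0le, hi0⟩ := hd.2 L
      have hex : ∃ t, (d (L + t)).val ≠ 0 := ⟨i0 - L, by rwa [Nat.add_sub_cancel' hi0le]⟩
      classical
      right
      refine ⟨L + Nat.find hex, ?_, ?_⟩
      · intro j hj
        rw [shift_iter]
        by_cases hjL : j < L
        · exact hag j hjL
        · rw [hzero j (by omega)]
          have hmin : ¬ (d (L + (j - L))).val ≠ 0 := Nat.find_min hex (by omega)
          have hdj : (d j).val = 0 := by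
            rw [Nat.add_sub_cancel' (by omega : L ≤ j)] at hmin
            omega
          exact Fin.ext (by simp [hdj])
      · rw [shift_iter, hzero (L + Nat.find hex) (by omega)]
        have hspec := Nat.find_spec hex
        exact Fin.lt_def.mpr (by simpa using Nat.pos_of_ne_zero hspec)
    · right
      refine ⟨t, fun j hj => ?_, ?_⟩
      · rw [shift_iter]; exact hag j hj
      · rw [shift_iter]; exact hlt


lemma lang_suffix (hm : 0 < m) {d : ℕ → Fin m} (hd : Admissible d) {v w : List (Fin m)}
    (hs : v <:+ w) (hw : w ∈ Lang d) : v ∈ Lang d := by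
  obtain ⟨t, rfl⟩ := hs
  rw [mem_lang_iff (hm := hm) hd] at hw ⊢
  intro i
  have h2 := hw (t.length + i)
  have hlen : (t ++ v).length - (t.length + i) = v.length - i := by
    simp only [List.length_append]
    omega
  rw [hlen] at h2
  refine PLe_congr (fun j hj => ?_) h2
  show wseq hm (t ++ v) (j + (t.length + i)) = wseq hm v (j + i)
  rw [show j + (t.length + i) = t.length + (j + i) by omega, wseq_append_right]

lemma suffix_of_agree {d : ℕ → Fin m} {w : List (Fin m)} {c : ℕ} (hc : c ≤ w.length)
    (h : ∀ j, j < c → wseq hm w (w.length - c + j) = d j) :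
    prefixWord d c <:+ w := by
  have hdrop : List.drop (w.length - c) w = prefixWord d c := by
    apply List.ext_getElem
    · simp only [List.length_drop, length_prefixWord]
      omega
    · intro j h1 h2
      have hj : j < c := by simpa [length_prefixWord] using h2
      have hkey := h j hj
      rw [wseq_lt (show w.length - c + j < w.length by omega)] at hkey
      simp only [List.getElem_drop]
      simp only [prefixWord, List.getElem_ofFn]
      exact hkey
  rw [← hdrop]
  exact List.drop_suffix _ w

lemma agree_of_suffix {d : ℕ → Fin m} {w : List (Fin m)} {c : ℕ}
    (hs : prefixWord d c <:+ w) :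
    ∀ j, j < c → wseq hm w (w.length - c + j) = d j := by
  obtain ⟨t, rfl⟩ := hs
  intro j hj
  rw [show (t ++ prefixWord d c).length - c + j = t.length + j by
        simp [List.length_append, length_prefixWord]]
  rw [wseq_append_right]
  exact wseq_prefixWord d hj

lemma classIndex_le (d : ℕ → Fin m) (n : ℕ) (v : List (Fin m)) :
    classIndex d n v ≤ n := by
  unfold BetaShift.classIndex
  exact Nat.findGreatest_le n

lemma classIndex_suffix (d : ℕ → Fin m) (n : ℕ) (v : List (Fin m)) :
    prefixWord d (classIndex d n v) <:+ v := by
  unfold BetaShift.classIndex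
  exact Nat.findGreatest_spec (P := fun k => prefixWord d k <:+ v) (Nat.zero_le n)
    (by simp [prefixWord])

lemma le_classIndex {d : ℕ → Fin m} {n c : ℕ} {v : List (Fin m)} (h : c ≤ n)
    (hs : prefixWord d c <:+ v) : c ≤ classIndex d n v := by
  unfold BetaShift.classIndex
  exact Nat.le_findGreatest h hs

lemma fol_eq (hm : 0 < m) {d : ℕ → Fin m} (hd : Admissible d) {w : List (Fin m)}
    (hw : w ∈ Lang d) :
    Fol d w = Fol d (prefixWord d (classIndex d w.length w)) := by
  classical
  set n := w.length with hn
  set k := classIndex d n w with hk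
  have hk_le : k ≤ n := hk ▸ classIndex_le d n w
  have hk_suf : prefixWord d k <:+ w := hk ▸ classIndex_suffix d n w
  obtain ⟨t, ht⟩ := hk_suf
  have htlen : t.length = n - k := by
    have := congrArg List.length ht
    simp [length_prefixWord] at this
    omega
  ext u
  simp only [Fol, Set.mem_setOf_eq]
  constructor
  · intro hu
    refine lang_suffix hm hd ⟨t, ?_⟩ hu
    rw [← List.append_assoc, ht]
  · intro hu
    rw [mem_lang_iff (hm := hm) hd] at hu ⊢
    intro i
    by_cases hcase : n - k ≤ i
    · have h2 := hu (i - (n - k))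
      have hlw : (w ++ u).length - i = (prefixWord d k ++ u).length - (i - (n - k)) := by
        simp [List.length_append, length_prefixWord]
        omega
      rw [hlw]
      refine PLe_congr (fun j hj => ?_) h2
      show wseq hm (prefixWord d k ++ u) (j + (i - (n - k))) = wseq hm (w ++ u) (j + i)
      rw [show w ++ u = t ++ (prefixWord d k ++ u) by rw [← List.append_assoc, ht]]
      rw [show j + i = t.length + (j + (i - (n - k))) by omega, wseq_append_right]
    · push_neg at hcase
      have h1 := (mem_lang_iff (hm := hm) hd w).mp hw i
      rcases h1 with hag | ⟨s, hs, hag, hlt⟩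
      · exfalso
        have hsuf : prefixWord d (n - i) <:+ w := by
          refine suffix_of_agree (hm := hm) (by omega) (fun j hj => ?_)
          rw [show w.length - (n - i) + j = j + i by omega]
          exact hag j (by omega)
        have hle : n - i ≤ k := hk ▸ le_classIndex (by omega) hsuf
        omega
      · right
        refine ⟨s, by simp [List.length_append]; omega, fun j hj => ?_, ?_⟩
      
        · show wseq hm (w ++ u) (j + i) = d j
          rw [wseq_append_left _ (show j + i < w.length by omega)]
          exact hag j hj
        · show wseq hm (w ++ u) (s + i) < d s
          rw [wseq_append_left _ (show s + i < w.length by omega)]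
          exact hlt

end Stmt2Aux


open Stmt2Aux in
/-- `|F(n)| ≤ n + 1` for every `n`. -/
theorem stmt2 (m : ℕ) (hm : 1 ≤ m) (d : ℕ → Fin m) (hd : Admissible d) (n : ℕ) :
    FolCount d n ≤ n + 1 := by
  classical
  have hsub : {S | ∃ w ∈ Lang d, w.length = n ∧ S = Fol d w}
      ⊆ (fun k => Fol d (prefixWord d k)) '' (Set.Iic n) := by
    rintro S ⟨w, hw, hlen, rfl⟩
    refine ⟨classIndex d n w, ?_, ?_⟩
    · exact classIndex_le d n w
    · rw [← hlen]
      exact (fol_eq hm hd hw).symm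
  have hfin : ((fun k => Fol d (prefixWord d k)) '' (Set.Iic n)).Finite :=
    (Set.finite_Iic n).image _
  calc FolCount d n ≤ ((fun k => Fol d (prefixWord d k)) '' (Set.Iic n)).ncard :=
        Set.ncard_le_ncard hsub hfin
    _ ≤ (Set.Iic n).ncard := Set.ncard_image_le (Set.finite_Iic n)
    _ = n + 1 := by
        rw [← Finset.coe_Iic, Set.ncard_coe_finset, Nat.card_Iic]
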